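/- Let ψ(u) = σu² + mu + ∫_{-∞}^0 (e^{ur} - 1 - ur) Π(dr) with σ ≥ 0, m ≥ 0, and Π a measure on (-∞,0) with ∫_{-∞}^0 min(|r|, r²) Π(dr) < ∞. Define f(r) = Π((-∞, r)) for r < 0. Then for all u ≥ 0: (u/(u+1))·ψ(u+1) = σu² + ψ(1)u + ∫_{-∞}^0 (e^{ur} - 1 - ur) e^{r} (f(r) dr + Π(dr)). -/

import Mathlib

open MeasureTheory Real Set
open scoped ENNReal

lemma exp_quad_le {x : ℝ} (hx : x ≤ 0) : exp x ≤ 1 + x + x ^ 2 / 2 := by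
  have hmono : Monotone (fun y : ℝ => exp y - 1 - y - y ^ 2 / 2) := by
    apply monotone_of_deriv_nonneg
    · fun_prop
    · intro y
      have hd : HasDerivAt (fun y : ℝ => exp y - 1 - y - y ^ 2 / 2) (exp y - 1 - y) y := by
        have := (((Real.hasDerivAt_exp y).sub_const 1).sub (hasDerivAt_id y)).sub
          ((hasDerivAt_pow 2 y).div_const 2)
        refine this.congr_deriv ?_
        push_cast; ring
      rw [hd.deriv]
      have := add_one_le_exp y
      linarith
  have := hmono hx
  simp only [Real.exp_zero] at this
  nlinarith

lemma phi_nonneg (v r : ℝ) : 0 ≤ exp (v * r) - 1 - v * r := by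
  have := add_one_le_exp (v * r); linarith

lemma phi_bound {v : ℝ} (hv : 0 ≤ v) {r : ℝ} (hr : r < 0) :
    exp (v * r) - 1 - v * r ≤ (v + v ^ 2) * min (|r|) (r ^ 2) := by
  have hvr : v * r ≤ 0 := mul_nonpos_of_nonneg_of_nonpos hv hr.le
  have h1 : exp (v * r) ≤ 1 := by
    calc exp (v * r) ≤ exp 0 := exp_le_exp.mpr hvr
      _ = 1 := exp_zero
  have h2 : exp (v * r) ≤ 1 + v * r + (v * r) ^ 2 / 2 := exp_quad_le hvr
  rcases le_total (|r|) (r ^ 2) with hc | hc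
  · rw [min_eq_left hc]
    have habs : |r| = -r := abs_of_neg hr
    nlinarith
  · rw [min_eq_right hc]
    nlinarith [sq_nonneg r, sq_nonneg (v * r)]

lemma h_cont (u : ℝ) : Continuous (fun r : ℝ => (exp (u * r) - 1 - u * r) * exp r) := by
  fun_prop

lemma tail_finite (Pi : Measure ℝ)
    (hPi_int : ∫⁻ r in Iio (0:ℝ), ENNReal.ofReal (min (|r|) (r ^ 2)) ∂Pi ≠ ⊤)
    {t : ℝ} (ht : t < 0) : Pi (Iio t) ≠ ⊤ := by
  have ht2 : (0:ℝ) < t ^ 2 := by nlinarith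
  have hc : (0:ℝ) < min (|t|) (t ^ 2) := lt_min (abs_pos.mpr (ne_of_lt ht)) ht2
  have hminmeas : Measurable fun r : ℝ => ENNReal.ofReal (min (|r|) (r ^ 2)) := by
    apply ENNReal.measurable_ofReal.comp
    exact (continuous_abs.min (continuous_pow 2)).measurable
  have key : ENNReal.ofReal (min (|t|) (t ^ 2)) * Pi (Iio t)
      ≤ ∫⁻ r in Iio (0:ℝ), ENNReal.ofReal (min (|r|) (r ^ 2)) ∂Pi := by
    calc ENNReal.ofReal (min (|t|) (t ^ 2)) * Pi (Iio t)
        = ∫⁻ _ in Iio t, ENNReal.ofReal (min (|t|) (t ^ 2)) ∂Pi := by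
          rw [setLIntegral_const, mul_comm]
      _ ≤ ∫⁻ r in Iio t, ENNReal.ofReal (min (|r|) (r ^ 2)) ∂Pi := by
          apply setLIntegral_mono hminmeas
          intro r hr
          simp only [mem_Iio] at hr
          apply ENNReal.ofReal_le_ofReal
          have h1 : |t| ≤ |r| := by rw [abs_of_neg ht, abs_of_neg (hr.trans ht)]; linarith
          have h2 : t ^ 2 ≤ r ^ 2 := by nlinarith
          exact le_min ((min_le_left _ _).trans h1) ((min_le_right _ _).trans h2)
      _ ≤ ∫⁻ r in Iio (0:ℝ), ENNReal.ofReal (min (|r|) (r ^ 2)) ∂Pi :=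
          lintegral_mono_set (Iio_subset_Iio ht.le)
  intro htop
  rw [htop, ENNReal.mul_top (ne_of_gt (ENNReal.ofReal_pos.mpr hc))] at key
  exact hPi_int (top_le_iff.mp key)

lemma sigmaFinite_restrict (Pi : Measure ℝ)
    (hPi_int : ∫⁻ r in Iio (0:ℝ), ENNReal.ofReal (min (|r|) (r ^ 2)) ∂Pi ≠ ⊤) :
    SigmaFinite (Pi.restrict (Iio (0:ℝ))) := by
  refine ⟨⟨{ set := fun n => Iio (-(1/((n:ℝ)+1))) ∪ Ici 0
             set_mem := fun n => mem_univ _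
             finite := ?_
             spanning := ?_ }⟩⟩
  · intro n
    have hpos : (0:ℝ) < 1/((n:ℝ)+1) := by positivity
    have ht : -(1/((n:ℝ)+1)) < 0 := by linarith
    calc Pi.restrict (Iio (0:ℝ)) (Iio (-(1/((n:ℝ)+1))) ∪ Ici 0)
        ≤ Pi.restrict (Iio (0:ℝ)) (Iio (-(1/((n:ℝ)+1)))) + Pi.restrict (Iio (0:ℝ)) (Ici 0) :=
          measure_union_le _ _
      _ = Pi (Iio (-(1/((n:ℝ)+1)))) + 0 := by
          rw [Measure.restrict_apply measurableSet_Iio,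
            Measure.restrict_apply measurableSet_Ici,
            inter_eq_self_of_subset_left (Iio_subset_Iio ht.le)]
          congr 1
          have : Ici (0:ℝ) ∩ Iio (0:ℝ) = ∅ := by
            ext x; simp only [mem_inter_iff, mem_Ici, mem_Iio, mem_empty_iff_false, iff_false]
            rintro ⟨h1, h2⟩; linarith
          rw [this, measure_empty]
      _ < ⊤ := by
          rw [add_zero]
          exact (tail_finite Pi hPi_int ht).lt_top
  · apply eq_univ_of_forall
    intro x
    rcases le_or_gt 0 x with hx | hx
    · exact mem_iUnion.mpr ⟨0, Or.inr hx⟩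
    · obtain ⟨n, hn⟩ := exists_nat_gt (1/(-x))
      refine mem_iUnion.mpr ⟨n, Or.inl ?_⟩
      simp only [mem_Iio]
      have hxpos : (0:ℝ) < -x := by linarith
      have h1 : 1/(-x) < (n:ℝ) + 1 := by linarith
      have h2 : 1/((n:ℝ)+1) < -x := by
        rw [div_lt_iff₀ (by positivity)]
        rw [div_lt_iff₀ hxpos] at h1
        linarith
      linarith

lemma bound_integrable (Pi : Measure ℝ)
    (hPi_int : ∫⁻ r in Iio (0:ℝ), ENNReal.ofReal (min (|r|) (r ^ 2)) ∂Pi ≠ ⊤)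
    {C : ℝ} (hC : 0 ≤ C) :
    Integrable (fun r => C * min (|r|) (r ^ 2)) (Pi.restrict (Iio (0:ℝ))) := by
  constructor
  · exact (continuous_const.mul (continuous_abs.min (continuous_pow 2))).aestronglyMeasurable
  · rw [hasFiniteIntegral_iff_ofReal (Filter.Eventually.of_forall fun r => by positivity)]
    have heq : ∀ r : ℝ, ENNReal.ofReal (C * min (|r|) (r ^ 2))
        = ENNReal.ofReal C * ENNReal.ofReal (min (|r|) (r ^ 2)) := fun r =>
      ENNReal.ofReal_mul hC
    simp_rw [heq]
    rw [lintegral_const_mul' _ _ ENNReal.ofReal_ne_top]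
    exact ENNReal.mul_lt_top ENNReal.ofReal_lt_top hPi_int.lt_top

lemma phi_integrable (Pi : Measure ℝ)
    (hPi_int : ∫⁻ r in Iio (0:ℝ), ENNReal.ofReal (min (|r|) (r ^ 2)) ∂Pi ≠ ⊤)
    {v : ℝ} (hv : 0 ≤ v) :
    Integrable (fun r => exp (v * r) - 1 - v * r) (Pi.restrict (Iio (0:ℝ))) := by
  refine (bound_integrable Pi hPi_int (C := v + v ^ 2) (by positivity)).mono' ?_ ?_
  · exact (by fun_prop : Continuous fun r : ℝ => exp (v * r) - 1 - v * r).aestronglyMeasurable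
  · filter_upwards [ae_restrict_mem measurableSet_Iio] with r hr
    rw [Real.norm_eq_abs, abs_of_nonneg (phi_nonneg v r)]
    exact phi_bound hv (mem_Iio.mp hr)

lemma h_integrable (Pi : Measure ℝ)
    (hPi_int : ∫⁻ r in Iio (0:ℝ), ENNReal.ofReal (min (|r|) (r ^ 2)) ∂Pi ≠ ⊤)
    {u : ℝ} (hu : 0 ≤ u) :
    Integrable (fun r => (exp (u * r) - 1 - u * r) * exp r) (Pi.restrict (Iio (0:ℝ))) := by
  refine (phi_integrable Pi hPi_int hu).mono' ((h_cont u).aestronglyMeasurable) ?_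
  filter_upwards [ae_restrict_mem measurableSet_Iio] with r hr
  rw [Real.norm_eq_abs, abs_of_nonneg (mul_nonneg (phi_nonneg u r) (exp_nonneg r))]
  have hle : exp r ≤ 1 := by
    calc exp r ≤ exp 0 := exp_le_exp.mpr (mem_Iio.mp hr).le
      _ = 1 := exp_zero
  calc (exp (u * r) - 1 - u * r) * exp r ≤ (exp (u * r) - 1 - u * r) * 1 :=
        mul_le_mul_of_nonneg_left hle (phi_nonneg u r)
    _ = exp (u * r) - 1 - u * r := mul_one _

lemma ftc_h {u : ℝ} (hu : 0 ≤ u) (s : ℝ) :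
    (u + 1) * ∫ r in s..(0:ℝ), (exp (u * r) - 1 - u * r) * exp r =
      u * (exp ((u + 1) * s) - 1 - (u + 1) * s) - u * (u + 1) * (exp (1 * s) - 1 - 1 * s)
        - (u + 1) * ((exp (u * s) - 1 - u * s) * exp s) := by
  have hne : u + 1 ≠ 0 := by positivity
  have hG : ∀ x : ℝ, HasDerivAt
      (fun y : ℝ => exp ((u + 1) * y) / (u + 1) - exp y - u * (y - 1) * exp y)
      ((exp (u * x) - 1 - u * x) * exp x) x := by
    intro x
    have h1 : HasDerivAt (fun y : ℝ => exp ((u + 1) * y) / (u + 1))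
        (exp ((u + 1) * x)) x := by
      have : HasDerivAt (fun y : ℝ => exp ((u + 1) * y)) (exp ((u + 1) * x) * (u + 1)) x := by
        simpa using ((hasDerivAt_id x).const_mul (u + 1)).exp
      have := this.div_const (u + 1)
      refine this.congr_deriv ?_
      exact mul_div_cancel_right₀ _ hne
    have h2 : HasDerivAt (fun y : ℝ => exp y) (exp x) x := Real.hasDerivAt_exp x
    have h3 : HasDerivAt (fun y : ℝ => u * (y - 1) * exp y)
        (u * exp x + u * (x - 1) * exp x) x := by
      have ha : HasDerivAt (fun y : ℝ => u * (y - 1)) u x := by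
        simpa using ((hasDerivAt_id x).sub_const 1).const_mul u
      exact ha.mul (Real.hasDerivAt_exp x)
    have := (h1.sub h2).sub h3
    refine this.congr_deriv ?_
    have e1 : exp ((u + 1) * x) = exp (u * x) * exp x := by
      rw [← Real.exp_add]; ring_nf
    rw [e1]
    ring
  rw [intervalIntegral.integral_eq_sub_of_hasDerivAt (fun x _ => hG x)
    ((h_cont u).intervalIntegrable s 0)]
  have e1 : exp ((u + 1) * s) = exp (u * s) * exp s := by
    rw [← Real.exp_add]; ring_nf
  have e2 : (1:ℝ) * s = s := one_mul s
  rw [e1, e2]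
  simp only [mul_zero, Real.exp_zero, zero_sub, mul_one]
  field_simp
  ring

lemma tonelli_swap {u : ℝ} (hu : 0 ≤ u) (Pi : Measure ℝ)
    (hSF : SigmaFinite (Pi.restrict (Iio (0:ℝ)))) :
    ∫⁻ r in Iio (0:ℝ),
        ENNReal.ofReal ((exp (u * r) - 1 - u * r) * exp r) * Pi (Iio r) ∂volume
      = ∫⁻ s in Iio (0:ℝ),
          ENNReal.ofReal (∫ r in s..(0:ℝ), (exp (u * r) - 1 - u * r) * exp r) ∂Pi := by
  set h : ℝ → ℝ := fun r => (exp (u * r) - 1 - u * r) * exp r with hh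
  have hhn : ∀ r, 0 ≤ h r := fun r => mul_nonneg (phi_nonneg u r) (exp_nonneg r)
  haveI := hSF
  set μ1 := volume.restrict (Iio (0:ℝ)) with hμ1
  set μ2 := Pi.restrict (Iio (0:ℝ)) with hμ2
  set F : ℝ → ℝ → ℝ≥0∞ :=
    fun r s => ENNReal.ofReal (h r) * (Iio r).indicator (fun _ => (1:ℝ≥0∞)) s with hF
  have hFmeas : AEMeasurable (Function.uncurry F) (μ1.prod μ2) := by
    apply Measurable.aemeasurable
    have : Function.uncurry F = fun p : ℝ × ℝ =>
        ENNReal.ofReal (h p.1) * ({q : ℝ × ℝ | q.2 < q.1}.indicator (fun _ => (1:ℝ≥0∞)) p) := by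
      ext p
      simp only [Function.uncurry, hF, indicator_apply, mem_Iio, mem_setOf_eq]
    rw [this]
    apply Measurable.mul
    · exact ENNReal.measurable_ofReal.comp ((h_cont u).measurable.comp measurable_fst)
    · exact (measurable_const.indicator (measurableSet_lt measurable_snd measurable_fst))
  have step1 : ∫⁻ r in Iio (0:ℝ), ENNReal.ofReal (h r) * Pi (Iio r) ∂volume
      = ∫⁻ r, ∫⁻ s, F r s ∂μ2 ∂μ1 := by
    apply setLIntegral_congr_fun measurableSet_Iio
    intro r hr; beta_reduce
    rw [hF]
    rw [lintegral_const_mul' _ _ ENNReal.ofReal_ne_top, lintegral_indicator measurableSet_Iio,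
      setLIntegral_one, hμ2, Measure.restrict_apply measurableSet_Iio,
      inter_eq_self_of_subset_left (Iio_subset_Iio (mem_Iio.mp hr).le)]
  have step2 : ∫⁻ r, ∫⁻ s, F r s ∂μ2 ∂μ1 = ∫⁻ s, ∫⁻ r, F r s ∂μ1 ∂μ2 :=
    lintegral_lintegral_swap hFmeas
  have step3 : ∫⁻ s, ∫⁻ r, F r s ∂μ1 ∂μ2
      = ∫⁻ s in Iio (0:ℝ), ENNReal.ofReal (∫ r in s..(0:ℝ), h r) ∂Pi := by
    rw [hμ2]
    apply setLIntegral_congr_fun measurableSet_Iio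
    intro s hs; beta_reduce
    have hs0 : s < 0 := mem_Iio.mp hs
    have hrw : ∀ r : ℝ, F r s = (Ioi s).indicator (fun r => ENNReal.ofReal (h r)) r := by
      intro r
      rw [hF]
      by_cases hc : s < r
      · simp [indicator_apply, hc, mem_Iio, mem_Ioi]
      · simp [indicator_apply, hc, mem_Iio, mem_Ioi]
    simp_rw [hrw]
    rw [lintegral_indicator measurableSet_Ioi, hμ1,
      Measure.restrict_restrict measurableSet_Ioi, Set.Ioi_inter_Iio]
    have hint : IntegrableOn h (Ioo s 0) volume :=
      ((h_cont u).integrableOn_Icc).mono_set Ioo_subset_Icc_self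
    rw [← ofReal_integral_eq_lintegral_ofReal hint
      (Filter.Eventually.of_forall fun r => hhn r)]
    congr 1
    rw [intervalIntegral.integral_of_le hs0.le, integral_Ioc_eq_integral_Ioo]
  rw [step1, step2, step3]

/-- Lévy–Khintchine decomposition of `ψ₂(u) = (u/(u+1)) ψ(u+1)` for a spectrally negative
Lévy exponent `ψ(u) = σu² + mu + ∫_{-∞}^0 (e^{ur} - 1 - ur) Pi(dr)`, where
`f(r) = Pi((-∞,r))` is the tail of the Lévy measure. -/
theorem stmt3 (σ m : ℝ) (hσ : 0 ≤ σ) (hm : 0 ≤ m) (Pi : Measure ℝ)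
    (hPi_supp : Pi (Ici (0:ℝ)) = 0)
    (hPi_int : ∫⁻ r in Iio (0:ℝ), ENNReal.ofReal (min (|r|) (r ^ 2)) ∂Pi ≠ ⊤)
    (ψ : ℝ → ℝ) (f : ℝ → ℝ) (hf : ∀ r < (0:ℝ), f r = (Pi (Iio r)).toReal)
    (hψ : ∀ u : ℝ, ψ u = σ * u ^ 2 + m * u + ∫ r in Iio (0:ℝ), (exp (u * r) - 1 - u * r) ∂Pi) :
    ∀ u : ℝ, 0 ≤ u →
      u / (u + 1) * ψ (u + 1) =
        σ * u ^ 2 + ψ 1 * u +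
          ((∫ r in Iio (0:ℝ), (exp (u * r) - 1 - u * r) * exp r * f r) +
            ∫ r in Iio (0:ℝ), (exp (u * r) - 1 - u * r) * exp r ∂Pi) := by
  intro u hu
  have hu1 : (0:ℝ) < u + 1 := by linarith
  have hne : u + 1 ≠ 0 := ne_of_gt hu1
  haveI hSF := sigmaFinite_restrict Pi hPi_int
  set h : ℝ → ℝ := fun r => (exp (u * r) - 1 - u * r) * exp r with hhdef
  have hhn : ∀ r, 0 ≤ h r := fun r => mul_nonneg (phi_nonneg u r) (exp_nonneg r)
  set g : ℝ → ℝ := fun s =>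
    u * (exp ((u + 1) * s) - 1 - (u + 1) * s) - u * (u + 1) * (exp (1 * s) - 1 - 1 * s)
      - (u + 1) * ((exp (u * s) - 1 - u * s) * exp s) with hgdef
  have hgftc : ∀ s : ℝ, g s / (u + 1) = ∫ r in s..(0:ℝ), h r := by
    intro s
    have H := ftc_h hu s
    rw [div_eq_iff hne]
    simp only [hgdef, hhdef]
    linarith
  -- integrability facts
  have hint1 : Integrable (fun r => exp ((u + 1) * r) - 1 - (u + 1) * r)
      (Pi.restrict (Iio (0:ℝ))) := phi_integrable Pi hPi_int hu1.le
  have hint2 : Integrable (fun r => exp (1 * r) - 1 - 1 * r)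
      (Pi.restrict (Iio (0:ℝ))) := phi_integrable Pi hPi_int zero_le_one
  have hintK : Integrable h (Pi.restrict (Iio (0:ℝ))) := h_integrable Pi hPi_int hu
  have hg_int : Integrable g (Pi.restrict (Iio (0:ℝ))) :=
    ((hint1.const_mul u).sub (hint2.const_mul (u * (u + 1)))).sub (hintK.const_mul (u + 1))
  have hgdiv_int : Integrable (fun s => g s / (u + 1)) (Pi.restrict (Iio (0:ℝ))) :=
    hg_int.div_const (u + 1)
  have hgdiv_nonneg : ∀ᵐ s ∂(Pi.restrict (Iio (0:ℝ))), 0 ≤ g s / (u + 1) := by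
    filter_upwards [ae_restrict_mem measurableSet_Iio] with s hs
    rw [hgftc s]
    exact intervalIntegral.integral_nonneg (mem_Iio.mp hs).le fun r _ => hhn r
  have hmono : Measurable fun r : ℝ => Pi (Iio r) :=
    Monotone.measurable fun a b hab => measure_mono (Iio_subset_Iio hab)
  -- the key identity for the tail integral
  have key : (∫ r in Iio (0:ℝ), (exp (u * r) - 1 - u * r) * exp r * f r) =
      (u * (∫ r in Iio (0:ℝ), (exp ((u + 1) * r) - 1 - (u + 1) * r) ∂Pi)
        - u * (u + 1) * (∫ r in Iio (0:ℝ), (exp (1 * r) - 1 - 1 * r) ∂Pi)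
        - (u + 1) * (∫ r in Iio (0:ℝ), (exp (u * r) - 1 - u * r) * exp r ∂Pi)) / (u + 1) := by
    have e0 : (∫ r in Iio (0:ℝ), (exp (u * r) - 1 - u * r) * exp r * f r)
        = ∫ r in Iio (0:ℝ), h r * (Pi (Iio r)).toReal := by
      apply integral_congr_ae
      filter_upwards [ae_restrict_mem measurableSet_Iio] with r hr
      rw [hf r (mem_Iio.mp hr), hhdef]
    rw [e0]
    have e1 : (∫ r in Iio (0:ℝ), h r * (Pi (Iio r)).toReal)
        = (∫⁻ r in Iio (0:ℝ), ENNReal.ofReal (h r) * Pi (Iio r) ∂volume).toReal := by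
      rw [integral_eq_lintegral_of_nonneg_ae
        (Filter.Eventually.of_forall fun r => mul_nonneg (hhn r) ENNReal.toReal_nonneg)
        (((h_cont u).measurable.mul (ENNReal.measurable_toReal.comp hmono)).aestronglyMeasurable)]
      congr 1
      apply setLIntegral_congr_fun measurableSet_Iio
      intro r hr; beta_reduce
      rw [ENNReal.ofReal_mul (hhn r), ENNReal.ofReal_toReal (tail_finite Pi hPi_int (mem_Iio.mp hr))]
    rw [e1, tonelli_swap hu Pi hSF]
    have e2 : (∫⁻ s in Iio (0:ℝ), ENNReal.ofReal (∫ r in s..(0:ℝ), h r) ∂Pi)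
        = ENNReal.ofReal (∫ s in Iio (0:ℝ), g s / (u + 1) ∂Pi) := by
      rw [ofReal_integral_eq_lintegral_ofReal hgdiv_int hgdiv_nonneg]
      apply setLIntegral_congr_fun measurableSet_Iio
      intro s hs; beta_reduce
      rw [hgftc s]
    rw [e2, ENNReal.toReal_ofReal (integral_nonneg_of_ae hgdiv_nonneg)]
    rw [integral_div]
    congr 1
    have hintK' : Integrable (fun r : ℝ => (exp (u * r) - 1 - u * r) * exp r)
        (Pi.restrict (Iio (0:ℝ))) := hintK
    rw [hgdef]
    simp only []
    have hA : Integrable (fun a : ℝ =>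
        u * (exp ((u + 1) * a) - 1 - (u + 1) * a) - u * (u + 1) * (exp (1 * a) - 1 - 1 * a))
        (Pi.restrict (Iio (0:ℝ))) := (hint1.const_mul u).sub (hint2.const_mul (u * (u + 1)))
    have hB : Integrable (fun a : ℝ => (u + 1) * ((exp (u * a) - 1 - u * a) * exp a))
        (Pi.restrict (Iio (0:ℝ))) := hintK'.const_mul (u + 1)
    have hC : Integrable (fun a : ℝ => u * (exp ((u + 1) * a) - 1 - (u + 1) * a))
        (Pi.restrict (Iio (0:ℝ))) := hint1.const_mul u
    have hD : Integrable (fun a : ℝ => u * (u + 1) * (exp (1 * a) - 1 - 1 * a))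
        (Pi.restrict (Iio (0:ℝ))) := hint2.const_mul (u * (u + 1))
    rw [integral_sub hA hB, integral_sub hC hD,
      integral_const_mul, integral_const_mul, integral_const_mul]
  rw [hψ (u + 1), hψ 1, key]
  field_simp
  ring
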